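/- For all u, v > 0, θ(1,u) + θ(1,v) ≤ θ(u+1, v+1), where θ is the logarithmic mean. -/

import Mathlib

/-- The logarithmic mean, extended by `θ(s,s) = s` and `θ(s,0) = θ(0,t) = 0`. -/
noncomputable def logMean (s t : ℝ) : ℝ :=
  if s = t then s else if s = 0 ∨ t = 0 then 0 else (s - t) / (Real.log s - Real.log t)

/-- Partial derivative of the logarithmic mean in the first variable. -/
noncomputable def logMean₁ (s t : ℝ) : ℝ := deriv (fun x => logMean x t) s

/-- Partial derivative of the logarithmic mean in the second variable. -/
noncomputable def logMean₂ (s t : ℝ) : ℝ := deriv (fun y => logMean s y) t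

lemma logMean_symm (s t : ℝ) : logMean s t = logMean t s := by
  unfold logMean
  rcases eq_or_ne s t with h | h
  · simp [h]
  · rw [if_neg h, if_neg (Ne.symm h)]
    by_cases h2 : s = 0 ∨ t = 0
    · rw [if_pos h2, if_pos h2.symm]
    · rw [if_neg h2, if_neg (fun hh => h2 hh.symm)]
      rw [← neg_div_neg_eq]; ring_nf

lemma logMean_eq_integral (s t : ℝ) (hs : 0 < s) (ht : 0 < t) :
    logMean s t = ∫ x in (0:ℝ)..1, Real.exp (x * Real.log s + (1 - x) * Real.log t) := by
  rcases eq_or_ne s t with h | h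
  · subst h
    have h1 : ∀ x : ℝ, Real.exp (x * Real.log s + (1 - x) * Real.log s) = s := by
      intro x
      rw [show x * Real.log s + (1 - x) * Real.log s = Real.log s by ring, Real.exp_log hs]
    simp only [logMean, if_pos rfl]
    simp_rw [h1]
    simp
  · have hlog : Real.log s - Real.log t ≠ 0 := by
      refine sub_ne_zero.mpr (fun he => h ?_)
      exact Real.log_injOn_pos (Set.mem_Ioi.mpr hs) (Set.mem_Ioi.mpr ht) he
    set c := Real.log s - Real.log t with hc
    have key : ∀ x ∈ Set.uIcc (0:ℝ) 1,
        HasDerivAt (fun y => Real.exp (c * y + Real.log t) / c)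
          (Real.exp (x * Real.log s + (1 - x) * Real.log t)) x := by
      intro x _
      have h1 : HasDerivAt (fun y : ℝ => c * y + Real.log t) c x := by
        simpa using ((hasDerivAt_id x).const_mul c).add_const (Real.log t)
      have h2 := (h1.exp).div_const c
      have h3 : Real.exp (c * x + Real.log t) * c / c
          = Real.exp (x * Real.log s + (1 - x) * Real.log t) := by
        rw [mul_div_assoc, div_self hlog, mul_one]
        congr 1
        rw [hc]; ring
      rwa [h3] at h2
    have hcont : Continuous fun x : ℝ => Real.exp (x * Real.log s + (1 - x) * Real.log t) := by
      fun_prop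
    rw [intervalIntegral.integral_eq_sub_of_hasDerivAt key (hcont.intervalIntegrable 0 1)]
    have e1 : Real.exp (c * 1 + Real.log t) = s := by
      rw [hc]; rw [show (Real.log s - Real.log t) * 1 + Real.log t = Real.log s by ring,
        Real.exp_log hs]
    have e0 : Real.exp (c * 0 + Real.log t) = t := by
      rw [mul_zero, zero_add, Real.exp_log ht]
    rw [e1, e0]
    unfold logMean
    rw [if_neg h, if_neg (by push_neg; exact ⟨ne_of_gt hs, ne_of_gt ht⟩)]
    rw [div_sub_div_same]

lemma pointwise_holder (u v x : ℝ) (hu : 0 < u) (hv : 0 < v) (hx0 : 0 ≤ x) (hx1 : x ≤ 1) :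
    u ^ x + v ^ (1 - x) ≤ (u + 1) ^ x * (v + 1) ^ (1 - x) := by
  have hu1 : (0:ℝ) < u + 1 := by linarith
  have hv1 : (0:ℝ) < v + 1 := by linarith
  have hD : 0 < (u + 1) ^ x * (v + 1) ^ (1 - x) :=
    mul_pos (Real.rpow_pos_of_pos hu1 x) (Real.rpow_pos_of_pos hv1 (1 - x))
  have hx1' : (0:ℝ) ≤ 1 - x := by linarith
  have h1 := Real.geom_mean_le_arith_mean2_weighted hx0 hx1'
    (le_of_lt (div_pos hu hu1)) (le_of_lt (div_pos one_pos hv1)) (by ring)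
  have h2 := Real.geom_mean_le_arith_mean2_weighted hx0 hx1'
    (le_of_lt (div_pos one_pos hu1)) (le_of_lt (div_pos hv hv1)) (by ring)
  have e1 : (u / (u + 1)) ^ x * (1 / (v + 1)) ^ (1 - x)
      = u ^ x / ((u + 1) ^ x * (v + 1) ^ (1 - x)) := by
    rw [Real.div_rpow hu.le hu1.le, Real.div_rpow zero_le_one hv1.le, Real.one_rpow]
    field_simp
  have e2 : (1 / (u + 1)) ^ x * (v / (v + 1)) ^ (1 - x)
      = v ^ (1 - x) / ((u + 1) ^ x * (v + 1) ^ (1 - x)) := by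
    rw [Real.div_rpow zero_le_one hu1.le, Real.div_rpow hv.le hv1.le, Real.one_rpow]
    field_simp
  rw [e1] at h1
  rw [e2] at h2
  have hsum : u ^ x / ((u + 1) ^ x * (v + 1) ^ (1 - x))
      + v ^ (1 - x) / ((u + 1) ^ x * (v + 1) ^ (1 - x)) ≤ 1 := by
    have : x * (u / (u + 1)) + (1 - x) * (1 / (v + 1))
        + (x * (1 / (u + 1)) + (1 - x) * (v / (v + 1))) = 1 := by
      field_simp; ring
    linarith
  rw [← add_div, div_le_one hD] at hsum
  exact hsum

theorem logMean_one_add (u v : ℝ) (hu : 0 < u) (hv : 0 < v) :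
    logMean 1 u + logMean 1 v ≤ logMean (u + 1) (v + 1) := by
  have hu1 : (0:ℝ) < u + 1 := by linarith
  have hv1 : (0:ℝ) < v + 1 := by linarith
  have r1 : logMean 1 u = ∫ x in (0:ℝ)..1, Real.exp (x * Real.log u) := by
    rw [logMean_symm, logMean_eq_integral u 1 hu one_pos]
    simp
  have r2 : logMean 1 v = ∫ x in (0:ℝ)..1, Real.exp ((1 - x) * Real.log v) := by
    rw [logMean_eq_integral 1 v one_pos hv]
    simp
  have r3 : logMean (u + 1) (v + 1)
      = ∫ x in (0:ℝ)..1, Real.exp (x * Real.log (u + 1) + (1 - x) * Real.log (v + 1)) :=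
    logMean_eq_integral _ _ hu1 hv1
  rw [r1, r2, r3]
  have c1 : Continuous fun x : ℝ => Real.exp (x * Real.log u) := by fun_prop
  have c2 : Continuous fun x : ℝ => Real.exp ((1 - x) * Real.log v) := by fun_prop
  have c3 : Continuous fun x : ℝ =>
      Real.exp (x * Real.log (u + 1) + (1 - x) * Real.log (v + 1)) := by fun_prop
  rw [← intervalIntegral.integral_add (c1.intervalIntegrable 0 1) (c2.intervalIntegrable 0 1)]
  apply intervalIntegral.integral_mono_on zero_le_one
    ((c1.add c2).intervalIntegrable 0 1) (c3.intervalIntegrable 0 1)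
  intro x hx
  have hx0 : 0 ≤ x := hx.1
  have hx1 : x ≤ 1 := hx.2
  have key := pointwise_holder u v x hu hv hx0 hx1
  have eu : Real.exp (x * Real.log u) = u ^ x := by
    rw [Real.rpow_def_of_pos hu, mul_comm]
  have ev : Real.exp ((1 - x) * Real.log v) = v ^ (1 - x) := by
    rw [Real.rpow_def_of_pos hv, mul_comm]
  have ed : Real.exp (x * Real.log (u + 1) + (1 - x) * Real.log (v + 1))
      = (u + 1) ^ x * (v + 1) ^ (1 - x) := by
    rw [Real.exp_add, Real.rpow_def_of_pos hu1, Real.rpow_def_of_pos hv1,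
      mul_comm (Real.log (u+1)), mul_comm (Real.log (v+1))]
  simp only [Pi.add_apply]
  rw [eu, ev, ed]
  exact key
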